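/- Let σ be a bipartite quasi-state and ρ a bipartite quantum state on the same space ℂ^{d_A}⊗ℂ^{d_B}, and let ε ≥ 0. If ‖σ − ρ‖₁ ≤ ε, then N_τ(σ | ρ) ≥ (1 − ε)·N_τ(ρ), where N_τ(ρ) = N_τ(ρ|ρ). -/

import Mathlib

open scoped BigOperators ComplexOrder

noncomputable section

/-- Bipartite matrices on `ℂ^{IA} ⊗ ℂ^{IB}`, indexed by pairs. -/
abbrev BMat (IA IB : Type) : Type := Matrix (IA × IB) (IA × IB) ℂ

/-- Partial transpose on the `B` system: `(X^{T_B})_{(i,j),(k,l)} = X_{(i,l),(k,j)}`. -/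
def ptB {IA IB : Type} (X : BMat IA IB) : BMat IA IB :=
  fun p q => X (p.1, q.2) (q.1, p.2)

/-- Trace norm `‖X‖₁ = tr √(X† X)`. -/
noncomputable def traceNorm {n : Type} [Fintype n] [DecidableEq n]
    (X : Matrix n n ℂ) : ℝ :=
  (((Matrix.posSemidef_conjTranspose_mul_self X).1.eigenvectorUnitary.1 *
    Matrix.diagonal ((fun r : ℝ => (r : ℂ)) ∘ (√·) ∘ (Matrix.posSemidef_conjTranspose_mul_self X).1.eigenvalues) *
    (star (Matrix.posSemidef_conjTranspose_mul_self X).1.eigenvectorUnitary : Matrix n n ℂ)).trace).re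

/-- Operator norm (largest singular value). -/
noncomputable def opNorm {n : Type} [Fintype n] [DecidableEq n] (X : Matrix n n ℂ) : ℝ :=
  ‖Matrix.toEuclideanCLM (𝕜 := ℂ) X‖

/-- Logarithmic negativity `E_N(X) = log₂ ‖X^{T_B}‖₁`. -/
noncomputable def EN {IA IB : Type} [Fintype IA] [Fintype IB] [DecidableEq IA] [DecidableEq IB]
    (X : BMat IA IB) : ℝ :=
  Real.logb 2 (traceNorm (ptB X))

/-- The extension `id_k ⊗ f` of a map on matrices, acting blockwise. -/
def extMap {I J : Type} (f : Matrix I I ℂ → Matrix J J ℂ) (k : ℕ)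
    (M : Matrix (Fin k × I) (Fin k × I) ℂ) : Matrix (Fin k × J) (Fin k × J) ℂ :=
  fun p q => f (fun i i' => M (p.1, i) (q.1, i')) p.2 q.2

/-- A map on matrices is completely positive if all its extensions `id_k ⊗ f`
map positive semidefinite matrices to positive semidefinite matrices. -/
def CompletelyPositive {I J : Type} [Fintype I] [Fintype J]
    (f : Matrix I I ℂ → Matrix J J ℂ) : Prop :=
  ∀ (k : ℕ) (M : Matrix (Fin k × I) (Fin k × I) ℂ), M.PosSemidef → (extMap f k M).PosSemidef

/-- A PPTq operation: a Hermitian-preserving, trace-preserving linear map `N`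
such that `T_{B'} ∘ N ∘ T_B` is completely positive. -/
def IsPPTq {IA IB JA JB : Type} [Fintype IA] [Fintype IB] [Fintype JA] [Fintype JB]
    (N : BMat IA IB →ₗ[ℂ] BMat JA JB) : Prop :=
  (∀ X : BMat IA IB, X.IsHermitian → (N X).IsHermitian) ∧
  (∀ X : BMat IA IB, (N X).trace = X.trace) ∧
  CompletelyPositive (fun X => ptB (N (ptB X)))

/-- A bipartite quasi-state: Hermitian with trace one. -/
def IsQuasiState {IA IB : Type} [Fintype IA] [Fintype IB] (ρ : BMat IA IB) : Prop :=
  ρ.IsHermitian ∧ ρ.trace = 1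

/-- A bipartite quantum state: positive semidefinite with trace one. -/
def IsState {IA IB : Type} [Fintype IA] [Fintype IB] (ρ : BMat IA IB) : Prop :=
  ρ.PosSemidef ∧ ρ.trace = 1

/-- The maximally entangled state `Φ^d = (1/d) ∑_{i,j} |ii⟩⟨jj|`. -/
noncomputable def MES (d : ℕ) : BMat (Fin d) (Fin d) :=
  fun p q => if p.1 = p.2 ∧ q.1 = q.2 then (1 : ℂ) / d else 0

/-- `n`-fold tensor (Kronecker) power, with all `A` factors grouped against all `B` factors. -/
def tensorPow {IA IB : Type} (ρ : BMat IA IB) (n : ℕ) :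
    BMat (Fin n → IA) (Fin n → IB) :=
  fun p q => ∏ i : Fin n, ρ (p.1 i, p.2 i) (q.1 i, q.2 i)

/-- Tensor (Kronecker) product of two bipartite matrices, grouping `A` systems together
and `B` systems together. -/
def tensorMul {IA IB JA JB : Type} (ρ : BMat IA IB) (σ : BMat JA JB) :
    BMat (IA × JA) (IB × JB) :=
  fun p q => ρ (p.1.1, p.2.1) (q.1.1, q.2.1) * σ (p.1.2, p.2.2) (q.1.2, q.2.2)

/-- One-shot exact distillable entanglement under PPTq operations. -/
noncomputable def oneShotDistill {IA IB : Type} [Fintype IA] [Fintype IB]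
    (ρ : BMat IA IB) : ℝ :=
  sSup { x : ℝ | ∃ d : ℕ, 0 < d ∧ x = Real.logb 2 d ∧
    ∃ Λ : BMat IA IB →ₗ[ℂ] BMat (Fin d) (Fin d), IsPPTq Λ ∧ Λ ρ = MES d }

/-- One-shot exact entanglement cost under PPTq operations. -/
noncomputable def oneShotCost {IA IB : Type} [Fintype IA] [Fintype IB]
    (ρ : BMat IA IB) : ℝ :=
  sInf { x : ℝ | ∃ d : ℕ, 0 < d ∧ x = Real.logb 2 d ∧
    ∃ Λ : BMat (Fin d) (Fin d) →ₗ[ℂ] BMat IA IB, IsPPTq Λ ∧ Λ (MES d) = ρ }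

/-- The one-shot distillation error for `n` copies towards `Φ^d`, optimized over PPTq operations. -/
noncomputable def distillErr {IA IB : Type} [Fintype IA] [Fintype IB]
    [DecidableEq IA] [DecidableEq IB] (ρ : BMat IA IB) (n d : ℕ) : ℝ :=
  sInf { e : ℝ | ∃ Λ : BMat (Fin n → IA) (Fin n → IB) →ₗ[ℂ] BMat (Fin d) (Fin d),
    IsPPTq Λ ∧ e = traceNorm (Λ (tensorPow ρ n) - MES d) }

/-- The one-shot dilution error for preparing `n` copies from `Φ^d`, optimized over PPTq operations. -/
noncomputable def costErr {IA IB : Type} [Fintype IA] [Fintype IB]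
    [DecidableEq IA] [DecidableEq IB] (ρ : BMat IA IB) (n d : ℕ) : ℝ :=
  sInf { e : ℝ | ∃ Λ : BMat (Fin d) (Fin d) →ₗ[ℂ] BMat (Fin n → IA) (Fin n → IB),
    IsPPTq Λ ∧ e = traceNorm (tensorPow ρ n - Λ (MES d)) }

/-- Distillable entanglement under PPTq operations (asymptotically vanishing error). -/
noncomputable def EDppt {IA IB : Type} [Fintype IA] [Fintype IB]
    [DecidableEq IA] [DecidableEq IB] (ρ : BMat IA IB) : ℝ :=
  sSup { r : ℝ | Filter.Tendsto (fun n : ℕ => distillErr ρ n (2 ^ ⌊r * n⌋₊))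
    Filter.atTop (nhds 0) }

/-- Entanglement cost under PPTq operations (asymptotically vanishing error). -/
noncomputable def ECppt {IA IB : Type} [Fintype IA] [Fintype IB]
    [DecidableEq IA] [DecidableEq IB] (ρ : BMat IA IB) : ℝ :=
  sInf { r : ℝ | Filter.Tendsto (fun n : ℕ => costErr ρ n (2 ^ ⌈r * n⌉₊))
    Filter.atTop (nhds 0) }

/-- Tempered negativity `N_τ(σ | ρ)`. -/
noncomputable def temperedNeg {IA IB : Type} [Fintype IA] [Fintype IB]
    [DecidableEq IA] [DecidableEq IB] (σ ρ : BMat IA IB) : ℝ :=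
  sSup { t : ℝ | ∃ X : Matrix (IA × IB) (IA × IB) ℂ, X.IsHermitian ∧
    opNorm (ptB X) ≤ 1 ∧ (X * ρ).trace = (opNorm X : ℂ) ∧ (X * σ).trace = (t : ℂ) }

/-- Asymptotic exact conversion rate under PPTq operations. -/
noncomputable def convRate {IA IB JA JB : Type} [Fintype IA] [Fintype IB]
    [Fintype JA] [Fintype JB]
    (ρ : BMat IA IB) (σ : BMat JA JB) : ℝ :=
  sSup { r : ℝ | 0 ≤ r ∧ ∀ᶠ n : ℕ in Filter.atTop,
    ∃ Λ : BMat (Fin n → IA) (Fin n → IB) →ₗ[ℂ]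
          BMat (Fin ⌊r * n⌋₊ → JA) (Fin ⌊r * n⌋₊ → JB),
      IsPPTq Λ ∧ Λ (tensorPow ρ n) = tensorPow σ ⌊r * n⌋₊ }

section Aux

open Matrix in
private lemma aux_dummy : True := trivial

open Matrix

variable {n : Type} [Fintype n] [DecidableEq n]

lemma aux_opNorm_zero : opNorm (0 : Matrix n n ℂ) = 0 := by
  rw [opNorm, map_zero, norm_zero]

lemma aux_opNorm_nonneg (M : Matrix n n ℂ) : 0 ≤ opNorm M := norm_nonneg _

/-- Bilinear bound: `|x† M y| ≤ ‖M‖ ‖x‖ ‖y‖`. -/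
lemma aux_dotProduct_le (M : Matrix n n ℂ) (x y : n → ℂ) :
    ‖star x ⬝ᵥ M *ᵥ y‖ ≤ opNorm M * ‖(WithLp.equiv 2 (n → ℂ)).symm x‖ *
      ‖(WithLp.equiv 2 (n → ℂ)).symm y‖ := by
  have h1 : star x ⬝ᵥ M *ᵥ y =
      inner ℂ ((WithLp.equiv 2 (n → ℂ)).symm x)
        (Matrix.toEuclideanCLM (𝕜 := ℂ) M ((WithLp.equiv 2 (n → ℂ)).symm y)) := by
    simp [PiLp.inner_apply, dotProduct, mul_comm]
  rw [h1]
  calc ‖inner ℂ ((WithLp.equiv 2 (n → ℂ)).symm x)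
        (Matrix.toEuclideanCLM (𝕜 := ℂ) M ((WithLp.equiv 2 (n → ℂ)).symm y))‖
      ≤ ‖(WithLp.equiv 2 (n → ℂ)).symm x‖ *
          ‖Matrix.toEuclideanCLM (𝕜 := ℂ) M ((WithLp.equiv 2 (n → ℂ)).symm y)‖ :=
        norm_inner_le_norm _ _
    _ ≤ ‖(WithLp.equiv 2 (n → ℂ)).symm x‖ *
          (opNorm M * ‖(WithLp.equiv 2 (n → ℂ)).symm y‖) := by
        gcongr
        exact (Matrix.toEuclideanCLM (𝕜 := ℂ) M).le_opNorm _
    _ = _ := by ring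

/-- Entry bound: `|M p q| ≤ ‖M‖`. -/
lemma aux_entry_le (M : Matrix n n ℂ) (p q : n) : ‖M p q‖ ≤ opNorm M := by
  have h := aux_dotProduct_le M (Pi.single p 1) (Pi.single q 1)
  have h2 : star (Pi.single p (1:ℂ)) ⬝ᵥ M *ᵥ Pi.single q 1 = M p q := by
    simp [dotProduct, Matrix.mulVec, Pi.single_apply, apply_ite (star : ℂ → ℂ),
      mul_ite, ite_mul, Finset.mul_sum]
  rw [h2] at h
  simpa using h

/-- Trace norm of a Hermitian matrix is the sum of the absolute values of eigenvalues. -/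
lemma aux_conjmul (U A B : Matrix n n ℂ) (hU : star U * U = 1) :
    (U * A * star U) * (U * B * star U) = U * (A * B) * star U := by
  simp only [Matrix.mul_assoc]
  rw [← Matrix.mul_assoc (star U) U (B * star U), hU, Matrix.one_mul]

lemma aux_traceNorm_hermitian (M : Matrix n n ℂ) (hM : M.IsHermitian) :
    traceNorm M = ∑ i, |hM.eigenvalues i| := by
  have hU : star (hM.eigenvectorUnitary : Matrix n n ℂ) *
      (hM.eigenvectorUnitary : Matrix n n ℂ) = 1 :=
    Unitary.coe_star_mul_self hM.eigenvectorUnitary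
  have hPSD : ((hM.eigenvectorUnitary : Matrix n n ℂ)
      * Matrix.diagonal (fun i => ((|hM.eigenvalues i| : ℝ) : ℂ))
      * star (hM.eigenvectorUnitary : Matrix n n ℂ)).PosSemidef := by
    rw [Matrix.star_eq_conjTranspose]
    exact Matrix.PosSemidef.mul_mul_conjTranspose_same
      (Matrix.posSemidef_diagonal_iff.mpr fun i => Complex.zero_le_real.mpr (abs_nonneg _)) _
  have hsq : ((hM.eigenvectorUnitary : Matrix n n ℂ)
      * Matrix.diagonal (fun i => ((|hM.eigenvalues i| : ℝ) : ℂ))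
      * star (hM.eigenvectorUnitary : Matrix n n ℂ)) ^ 2 = Mᴴ * M := by
    rw [pow_two, aux_conjmul _ _ _ hU, hM.eq]
    conv_rhs => rw [hM.spectral_theorem, Unitary.conjStarAlgAut_apply]
    rw [aux_conjmul _ _ _ hU, Matrix.diagonal_mul_diagonal, Matrix.diagonal_mul_diagonal]
    have hfun : (fun i => ((|hM.eigenvalues i| : ℝ) : ℂ) * ((|hM.eigenvalues i| : ℝ) : ℂ))
        = (fun i => (RCLike.ofReal ∘ hM.eigenvalues) i * (RCLike.ofReal ∘ hM.eigenvalues) i) := by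
      funext i
      simp only [Function.comp_apply]
      show ((|hM.eigenvalues i| : ℝ) : ℂ) * ((|hM.eigenvalues i| : ℝ) : ℂ)
        = ((hM.eigenvalues i : ℝ) : ℂ) * ((hM.eigenvalues i : ℝ) : ℂ)
      rw [← Complex.ofReal_mul, ← Complex.ofReal_mul, abs_mul_abs_self]
    rw [hfun]
  have key : traceNorm M = ((cfc Real.sqrt (Mᴴ * M)).trace).re := by
    rw [(Matrix.posSemidef_conjTranspose_mul_self M).1.cfc_eq]; rfl
  have key2 : cfc Real.sqrt (Mᴴ * M)
      = (hM.eigenvectorUnitary : Matrix n n ℂ)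
      * Matrix.diagonal (fun i => ((|hM.eigenvalues i| : ℝ) : ℂ))
      * star (hM.eigenvectorUnitary : Matrix n n ℂ) := by
    have hsa : IsSelfAdjoint M := hM
    rw [hM.eq, ← sq, ← cfc_pow_id (R := ℝ) M 2 hsa, ← cfc_comp Real.sqrt (· ^ 2) M hsa]
    rw [cfc_congr (g := abs) (fun x _ => by simp [Real.sqrt_sq_eq_abs]), hM.cfc_eq,
      Matrix.IsHermitian.cfc, Unitary.conjStarAlgAut_apply]
    rfl
  rw [key, key2, Matrix.trace_mul_cycle, hU, Matrix.one_mul, Matrix.trace_diagonal,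
    ← Complex.ofReal_sum, Complex.ofReal_re]

lemma aux_traceNorm_nonneg (M : Matrix n n ℂ) (hM : M.IsHermitian) : 0 ≤ traceNorm M := by
  rw [aux_traceNorm_hermitian M hM]
  positivity

/-- Hölder-type bound: `|tr (X M)| ≤ ‖X‖_∞ ‖M‖₁` for Hermitian `M`. -/
lemma aux_trace_mul_le (X M : Matrix n n ℂ) (hM : M.IsHermitian) :
    ‖(X * M).trace‖ ≤ opNorm X * traceNorm M := by
  set U : Matrix n n ℂ := (hM.eigenvectorUnitary : Matrix n n ℂ) with hUdef
  have hU : star U * U = 1 := Unitary.coe_star_mul_self hM.eigenvectorUnitary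
  have htr : (X * M).trace
      = ∑ i, (star U * X * U) i i * ((hM.eigenvalues i : ℝ) : ℂ) := by
    conv_lhs => rw [hM.spectral_theorem, Unitary.conjStarAlgAut_apply]
    rw [show X * (U * Matrix.diagonal (RCLike.ofReal ∘ hM.eigenvalues) * star U)
        = (X * U * Matrix.diagonal (RCLike.ofReal ∘ hM.eigenvalues)) * star U by
      simp only [Matrix.mul_assoc]]
    rw [Matrix.trace_mul_comm, ← Matrix.mul_assoc, ← Matrix.mul_assoc]
    simp [Matrix.trace, Matrix.diag, Matrix.mul_diagonal, Function.comp]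
  have hdiag : ∀ i, (star U * X * U) i i
      = star (fun j => U j i) ⬝ᵥ X *ᵥ (fun j => U j i) := by
    intro i
    simp only [Matrix.mul_apply, dotProduct, Matrix.mulVec, Matrix.star_apply,
      Pi.star_apply, Finset.sum_mul, Finset.mul_sum]
    rw [Finset.sum_comm]
    refine Finset.sum_congr rfl fun k _ => Finset.sum_congr rfl fun j _ => by ring
  have hcol : ∀ i, ‖(WithLp.equiv 2 (n → ℂ)).symm (fun j => U j i)‖ = 1 := by
    intro i
    have h2 : ∑ j, ‖U j i‖ ^ 2 = 1 := by
      have e1 : ((1 : Matrix n n ℂ) i i) = ((∑ j, ‖U j i‖ ^ 2 : ℝ) : ℂ) := by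
        rw [← hU, Complex.ofReal_sum]
        simp only [Matrix.mul_apply, Matrix.star_apply, RCLike.star_def]
        refine Finset.sum_congr rfl fun j _ => ?_
        rw [mul_comm, Complex.mul_conj]
        rw [Complex.normSq_eq_norm_sq]
      rw [Matrix.one_apply_eq] at e1
      exact_mod_cast e1.symm
    rw [EuclideanSpace.norm_eq]
    simp only [WithLp.equiv_symm_apply, WithLp.ofLp_toLp]
    rw [h2, Real.sqrt_one]
  calc ‖(X * M).trace‖
      ≤ ∑ i, ‖(star U * X * U) i i * ((hM.eigenvalues i : ℝ) : ℂ)‖ := by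
        rw [htr]; exact norm_sum_le _ _
    _ ≤ ∑ i, opNorm X * |hM.eigenvalues i| := by
        refine Finset.sum_le_sum fun i _ => ?_
        rw [norm_mul]
        have h1 : ‖(star U * X * U) i i‖ ≤ opNorm X := by
          rw [hdiag i]
          have := aux_dotProduct_le X (fun j => U j i) (fun j => U j i)
          rwa [hcol i, mul_one, mul_one] at this
        have h2 : ‖((hM.eigenvalues i : ℝ) : ℂ)‖ = |hM.eigenvalues i| := by
          rw [Complex.norm_real, Real.norm_eq_abs]
        rw [h2]
        exact mul_le_mul_of_nonneg_right h1 (abs_nonneg _)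
    _ = opNorm X * traceNorm M := by
        rw [aux_traceNorm_hermitian M hM, Finset.mul_sum]

end Aux

section Aux2

open Matrix

variable {dA dB : ℕ}

/-- For feasible `X` (with `‖X^{T_B}‖_∞ ≤ 1` and `tr(Xρ) = ‖X‖_∞`), the operator
norm of `X` is bounded by a constant depending only on `ρ`. -/
lemma aux_opNorm_feasible_le (X ρ : BMat (Fin dA) (Fin dB))
    (h1 : opNorm (ptB X) ≤ 1) (h2 : (X * ρ).trace = ((opNorm X : ℝ) : ℂ)) :
    opNorm X ≤ ∑ i : Fin dA × Fin dB, ∑ j : Fin dA × Fin dB, ‖ρ j i‖ := by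
  have hentry : ∀ i j : Fin dA × Fin dB, ‖X i j‖ ≤ 1 := by
    intro i j
    have hx : X i j = ptB X (i.1, j.2) (j.1, i.2) := by simp [ptB]
    rw [hx]
    exact (aux_entry_le (ptB X) _ _).trans h1
  have : opNorm X = ((opNorm X : ℝ) : ℂ).re := by simp
  rw [this, ← h2]
  calc ((X * ρ).trace).re ≤ ‖(X * ρ).trace‖ := Complex.re_le_norm _
    _ ≤ ∑ i, ‖(X * ρ) i i‖ := norm_sum_le _ _
    _ ≤ ∑ i : Fin dA × Fin dB, ∑ j : Fin dA × Fin dB, ‖ρ j i‖ := by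
        refine Finset.sum_le_sum fun i _ => ?_
        calc ‖(X * ρ) i i‖ ≤ ∑ j, ‖X i j * ρ j i‖ := norm_sum_le _ _
          _ ≤ ∑ j, ‖ρ j i‖ := by
              refine Finset.sum_le_sum fun j _ => ?_
              rw [norm_mul]
              exact mul_le_of_le_one_left (norm_nonneg _) (hentry i j)

/-- The tempered-negativity feasible set is bounded above. -/
lemma aux_bddAbove (σ ρ : BMat (Fin dA) (Fin dB)) (hσ : σ.IsHermitian) :
    BddAbove { t : ℝ | ∃ X : Matrix ((Fin dA) × (Fin dB)) ((Fin dA) × (Fin dB)) ℂ,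
      X.IsHermitian ∧ opNorm (ptB X) ≤ 1 ∧ (X * ρ).trace = ((opNorm X : ℝ) : ℂ) ∧
      (X * σ).trace = ((t : ℝ) : ℂ) } := by
  refine ⟨(∑ i : Fin dA × Fin dB, ∑ j : Fin dA × Fin dB, ‖ρ j i‖) * traceNorm σ,
    fun t ht => ?_⟩
  obtain ⟨X, hX, h1, h2, h3⟩ := ht
  have ht' : t = ((X * σ).trace).re := by rw [h3]; simp
  calc t = ((X * σ).trace).re := ht'
    _ ≤ ‖(X * σ).trace‖ := Complex.re_le_norm _
    _ ≤ opNorm X * traceNorm σ := aux_trace_mul_le X σ hσ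
    _ ≤ (∑ i : Fin dA × Fin dB, ∑ j : Fin dA × Fin dB, ‖ρ j i‖) * traceNorm σ :=
        mul_le_mul_of_nonneg_right (aux_opNorm_feasible_le X ρ h1 h2)
          (aux_traceNorm_nonneg σ hσ)

/-- Zero belongs to the tempered-negativity feasible set. -/
lemma aux_zero_mem (σ ρ : BMat (Fin dA) (Fin dB)) :
    (0 : ℝ) ∈ { t : ℝ | ∃ X : Matrix ((Fin dA) × (Fin dB)) ((Fin dA) × (Fin dB)) ℂ,
      X.IsHermitian ∧ opNorm (ptB X) ≤ 1 ∧ (X * ρ).trace = ((opNorm X : ℝ) : ℂ) ∧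
      (X * σ).trace = (((0 : ℝ) : ℝ) : ℂ) } := by
  refine ⟨0, Matrix.isHermitian_zero, ?_, ?_, ?_⟩
  · have : ptB (0 : BMat (Fin dA) (Fin dB)) = 0 := rfl
    rw [this, aux_opNorm_zero]; norm_num
  · simp [aux_opNorm_zero]
  · simp

end Aux2

/-- If `‖σ − ρ‖₁ ≤ ε`, then `N_τ(σ | ρ) ≥ (1 − ε)·N_τ(ρ)`. -/
theorem temperedNeg_ge_of_close {dA dB : ℕ}
    (σ ρ : BMat (Fin dA) (Fin dB)) (hσ : IsQuasiState σ) (hρ : IsState ρ)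
    (ε : ℝ) (hε : 0 ≤ ε) (h : traceNorm (σ - ρ) ≤ ε) :
    (1 - ε) * temperedNeg ρ ρ ≤ temperedNeg σ ρ := by
  have hσH : σ.IsHermitian := hσ.1
  have hρH : ρ.IsHermitian := hρ.1.1
  have hρσ : (σ - ρ).IsHermitian := hσH.sub hρH
  simp only [temperedNeg]
  have hbdd1 := aux_bddAbove ρ ρ hρH
  have hbdd2 := aux_bddAbove σ ρ hσH
  have h01 := aux_zero_mem ρ ρ
  have h02 := aux_zero_mem σ ρ
  have hn1 : (0 : ℝ) ≤ sSup { t : ℝ | ∃ X : Matrix ((Fin dA) × (Fin dB)) ((Fin dA) × (Fin dB)) ℂ,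
      X.IsHermitian ∧ opNorm (ptB X) ≤ 1 ∧ (X * ρ).trace = ((opNorm X : ℝ) : ℂ) ∧
      (X * ρ).trace = ((t : ℝ) : ℂ) } := le_csSup hbdd1 h01
  have hn2 : (0 : ℝ) ≤ sSup { t : ℝ | ∃ X : Matrix ((Fin dA) × (Fin dB)) ((Fin dA) × (Fin dB)) ℂ,
      X.IsHermitian ∧ opNorm (ptB X) ≤ 1 ∧ (X * ρ).trace = ((opNorm X : ℝ) : ℂ) ∧
      (X * σ).trace = ((t : ℝ) : ℂ) } := le_csSup hbdd2 h02
  rcases le_or_gt (1 - ε) 0 with hc | hc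
  · nlinarith
  · rw [mul_comm, ← le_div_iff₀ hc]
    refine csSup_le ⟨0, h01⟩ fun t ht => ?_
    rw [le_div_iff₀ hc]
    obtain ⟨X, hX, h1, h2, h3⟩ := ht
    have htop : t = opNorm X := by
      have := h3.symm.trans h2
      exact_mod_cast this
    have hreal : (X * σ).trace = ((((X * σ).trace).re : ℝ) : ℂ) := by
      have hstar : (starRingEnd ℂ) ((X * σ).trace) = (X * σ).trace := by
        have h4 : (X * σ).conjTranspose = σ * X := by
          rw [Matrix.conjTranspose_mul, hσH.eq, hX.eq]
        have h5 := Matrix.trace_conjTranspose (X * σ)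
        rw [h4, Matrix.trace_mul_comm] at h5
        exact h5.symm
      exact (Complex.conj_eq_iff_re.mp hstar).symm
    have hsle : ((X * σ).trace).re
        ≤ sSup { t : ℝ | ∃ X : Matrix ((Fin dA) × (Fin dB)) ((Fin dA) × (Fin dB)) ℂ,
        X.IsHermitian ∧ opNorm (ptB X) ≤ 1 ∧ (X * ρ).trace = ((opNorm X : ℝ) : ℂ) ∧
        (X * σ).trace = ((t : ℝ) : ℂ) } := le_csSup hbdd2 ⟨X, hX, h1, h2, hreal⟩
    have hdiff : (X * (σ - ρ)).trace = (X * σ).trace - (X * ρ).trace := by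
      rw [Matrix.mul_sub, Matrix.trace_sub]
    have hb : ‖(X * (σ - ρ)).trace‖ ≤ opNorm X * traceNorm (σ - ρ) :=
      aux_trace_mul_le X (σ - ρ) hρσ
    have hb2 : opNorm X * traceNorm (σ - ρ) ≤ t * ε := by
      rw [htop]
      exact mul_le_mul_of_nonneg_left h (aux_opNorm_nonneg X)
    have hre : -(t * ε) ≤ ((X * (σ - ρ)).trace).re := by
      have habs := Complex.abs_re_le_norm ((X * (σ - ρ)).trace)
      have hna := neg_abs_le (((X * (σ - ρ)).trace).re)
      linarith
    have hsum : ((X * σ).trace).re = t + ((X * (σ - ρ)).trace).re := by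
      have h5 : (X * σ).trace = (X * ρ).trace + (X * (σ - ρ)).trace := by
        rw [hdiff]; ring
      rw [h5, Complex.add_re, h3, Complex.ofReal_re]
    have hexp : t * (1 - ε) = t - t * ε := by ring
    linarith

end
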